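/- Let r ≥ 0 be an integer. Let (H^d)_{d ≥ 0} be a family of finite-dimensional ℚ-vector spaces equipped with an increasing filtration P₀H^d ⊆ P₁H^d ⊆ ⋯ ⊆ H^d (with the convention P₋₁H^d = 0) satisfying P_d H^d = H^d for all d, and let β : H^d → H^{d+2} (for all d) be linear maps with β(P_k H^d) ⊆ P_k H^{d+2} for all k, d. Assume the hard Lefschetz condition: for every k ≥ 0 and every m with 0 ≤ m ≤ r, the map induced by β^{r−m} on graded pieces, Gr^P_k H^{k+m} → Gr^P_k H^{k+2r−m}, is injective (where Gr^P_k H^d = P_k H^d / P_{k−1} H^d). Then for every i ≥ 0, every j with 0 ≤ j ≤ r, and every v ∈ H^{i+j} with β^{r−j+1} v = 0, one has v ∈ P_i H^{i+j}. -/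
import Mathlib


/-- Abstract content of Proposition 1.2(a): in a graded vector space `Hgr` with an increasing
filtration `P` (with `P k = ⊥` for `k < 0` and `P d H^d = H^d`), and an operator `β` of degree `2`
preserving `P` and satisfying hard Lefschetz on the graded pieces, any class `v ∈ H^{i+j}` with
`β^{r-j+1} v = 0` lies in `P_i H^{i+j}`. -/
theorem stmt5 (r : ℕ) (W : Type*) [AddCommGroup W] [Module ℚ W]
    (Hgr : ℕ → Submodule ℚ W)
    (hfin : ∀ d, FiniteDimensional ℚ (Hgr d))
    (P : ℤ → ℕ → Submodule ℚ W)
    (hPH : ∀ k d, P k d ≤ Hgr d)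
    (hmono : ∀ k k' : ℤ, ∀ d, k ≤ k' → P k d ≤ P k' d)
    (hneg : ∀ k : ℤ, ∀ d, k < 0 → P k d = ⊥)
    (htop : ∀ d : ℕ, P (d : ℤ) d = Hgr d)
    (β : Module.End ℚ W)
    (hβH : ∀ d, (Hgr d).map β ≤ Hgr (d + 2))
    (hβP : ∀ (k : ℤ) (d : ℕ), (P k d).map β ≤ P k (d + 2))
    (hHL : ∀ k m : ℕ, m ≤ r → ∀ v ∈ P (k : ℤ) (k + m),
      (β ^ (r - m)) v ∈ P ((k : ℤ) - 1) (k + 2 * r - m) → v ∈ P ((k : ℤ) - 1) (k + m)) :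
    ∀ i j : ℕ, j ≤ r → ∀ v ∈ Hgr (i + j),
      (β ^ (r - j + 1)) v = 0 → v ∈ P (i : ℤ) (i + j) := by
  intro i j hj v hv hβv
  have key : ∀ t : ℕ, t ≤ j → v ∈ P ((i : ℤ) + j - t) (i + j) := by
    intro t
    induction t with
    | zero =>
      intro _
      have : ((i : ℤ) + j - (0:ℕ)) = ((i + j : ℕ) : ℤ) := by push_cast; ring
      rw [this, htop]
      exact hv
    | succ t ih =>
      intro ht
      have htj : t < j := ht
      have h1 : v ∈ P ((i : ℤ) + j - t) (i + j) := ih htj.le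
      have hk : ((i + (j - t) : ℕ) : ℤ) = (i : ℤ) + j - t := by
        push_cast [Nat.cast_sub htj.le]; ring
      have hd : i + (j - t) + t = i + j := by omega
      have hz : (β ^ (r - t)) v = 0 := by
        have hrt : r - t = (r - t - (r - j + 1)) + (r - j + 1) := by omega
        rw [hrt, pow_add, Module.End.mul_apply, hβv, map_zero]
      have := hHL (i + (j - t)) t (le_trans htj.le hj) v
        (by rw [hd, hk]; exact h1) (by rw [hz]; exact zero_mem _)
      rw [hd, hk] at this
      have he : (i : ℤ) + j - t - 1 = (i : ℤ) + j - (t + 1 : ℕ) := by push_cast; ring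
      rwa [he] at this
  have := key j le_rfl
  have he : (i : ℤ) + j - j = (i : ℤ) := by ring
  rwa [he] at this
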